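/- A μ-weakly convex function f with α-sharp minimum has no stationary points x with 0 < dist(x, X*) < 2α/μ. -/

import Mathlib

/-- A `μ`-weakly convex function with an `α`-sharp minimum has no stationary
points `x` (points with `0 ∈ ∂f(x)`) satisfying `0 < dist(x, X*) < 2α/μ`. -/
theorem weakly_convex_sharp_no_stationary_points {n : ℕ}
    (f : EuclideanSpace ℝ (Fin n) → ℝ) (μ α fstar : ℝ) (hμ : 0 < μ) (hα : 0 < α)
    (Xstar : Set (EuclideanSpace ℝ (Fin n)))
    (hXstar : Xstar = {y | ∀ z, f y ≤ f z}) (hne : Xstar.Nonempty)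
    (hfstar : ∀ y ∈ Xstar, f y = fstar)
    (subdiff : EuclideanSpace ℝ (Fin n) → Set (EuclideanSpace ℝ (Fin n)))
    (hsub : ∀ x gx, gx ∈ subdiff x →
      ∀ y, f y ≥ f x + (inner ℝ gx (y - x) : ℝ) - μ / 2 * ‖y - x‖ ^ 2)
    (hsharp : ∀ x, f x - fstar ≥ α * Metric.infDist x Xstar) :
    ∀ x, 0 ∈ subdiff x →
      ¬ (0 < Metric.infDist x Xstar ∧ Metric.infDist x Xstar < 2 * α / μ) := by
  intro x h0 ⟨hd0, hdlt⟩
  set d : ℝ := Metric.infDist x Xstar with hdd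
  have hd0' : (0:ℝ) ≤ d := le_of_lt hd0
  have hgap : μ/2*d^2 < α*d := by
    have h : d * μ < 2 * α := (lt_div_iff₀ hμ).mp hdlt
    nlinarith
  set δ : ℝ := min 1 ((α*d - μ/2*d^2)/(2*μ*(d+1))) with hδdef
  have hμd : 0 < 2*μ*(d+1) := by nlinarith
  have hδpos : 0 < δ := lt_min one_pos (div_pos (by linarith) hμd)
  have hlt : d < d + δ := by linarith
  obtain ⟨y, hy, hdist⟩ := (Metric.infDist_lt_iff hne).mp hlt
  have hfy : f y = fstar := hfstar y hy
  have h1 : f y ≥ f x + (inner ℝ (0 : EuclideanSpace ℝ (Fin n)) (y - x) : ℝ)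
      - μ / 2 * ‖y - x‖ ^ 2 := hsub x 0 h0 y
  rw [inner_zero_left] at h1
  have h2 : f x - fstar ≥ α * d := hsharp x
  have hnorm : ‖y - x‖ = dist x y := by rw [dist_eq_norm, norm_sub_rev]
  rw [hnorm] at h1
  have hδ1 : δ ≤ 1 := min_le_left _ _
  have hδ2 : δ ≤ (α*d - μ/2*d^2)/(2*μ*(d+1)) := min_le_right _ _
  have hδb : δ * (2*μ*(d+1)) ≤ α*d - μ/2*d^2 := by
    calc δ * (2*μ*(d+1)) ≤ (α*d - μ/2*d^2)/(2*μ*(d+1)) * (2*μ*(d+1)) :=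
          mul_le_mul_of_nonneg_right hδ2 (le_of_lt hμd)
      _ = α*d - μ/2*d^2 := div_mul_cancel₀ _ (ne_of_gt hμd)
  have hdn : 0 ≤ dist x y := dist_nonneg
  have hsq : dist x y ^ 2 < (d + δ) ^ 2 := by nlinarith
  nlinarith [sq_nonneg δ, sq_nonneg (dist x y - d)]
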